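/- Let T > 0 and ω ∈ ℝ with e^{2iωT} ≠ 1, and let (θ_k) be a sequence of positive reals with θ_k → ∞ and all θ_k distinct from ±ω and with e^{iθ_kT} ∉ {e^{iωT}, e^{-iωT}}. Define d_k = (1/(iω+iθ_k))(e^{iωT+iθ_kT}-1) - (1/(iω-iθ_k))(e^{iωT-iθ_kT}-1). Then inf_k |d_k|(1+θ_k) > 0. -/

import Mathlib

open Filter

lemma sin_ne_aux (T ω : ℝ) (hωT : Complex.exp (2 * Complex.I * ω * T) ≠ 1) :
    Real.sin (ω * T) ≠ 0 := by
  intro h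
  apply hωT
  rw [Real.sin_eq_zero_iff] at h
  obtain ⟨n, hn⟩ := h
  rw [Complex.exp_eq_one_iff]
  refine ⟨n, ?_⟩
  have hn' := congrArg (Complex.ofReal) hn
  push_cast at hn' ⊢
  linear_combination (-2*Complex.I) * hn'

lemma abs_exp_I_mul (x : ℝ) : ‖Complex.exp (Complex.I * x)‖ = 1 := by
  rw [show Complex.I * x = (x:ℂ) * Complex.I by ring]
  exact Complex.norm_exp_ofReal_mul_I x

lemma abs_aux (x r : ℝ) :
    2 * |Real.sin x| ≤ ‖Complex.exp (Complex.I * x) * r - 2‖ := by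
  rw [show Complex.I * x = (x:ℂ) * Complex.I by ring, Complex.exp_mul_I,
    ← Complex.ofReal_cos, ← Complex.ofReal_sin]
  set u : ℂ := (↑(Real.cos x) + ↑(Real.sin x) * Complex.I) * r - 2 with hu
  have hre : u.re = Real.cos x * r - 2 := by
    simp [hu, Complex.cos_ofReal_re, Complex.sin_ofReal_re]
  have him : u.im = Real.sin x * r := by
    simp [hu, Complex.cos_ofReal_re, Complex.sin_ofReal_re]
  have h2 : ‖u‖^2 = (Real.cos x * r - 2)^2 + (Real.sin x * r)^2 := by
    rw [Complex.sq_norm, Complex.normSq_apply, hre, him]; ring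
  have hA : 0 ≤ ‖u‖ := norm_nonneg u
  have hpyth := Real.sin_sq_add_cos_sq x
  have hsq : (2 * |Real.sin x|)^2 ≤ ‖u‖^2 := by
    have := _root_.sq_abs (Real.sin x)
    nlinarith [sq_nonneg (r - 2*Real.cos x)]
  exact le_of_pow_le_pow_left₀ two_ne_zero hA hsq

lemma d_ne_zero (T ω θk : ℝ) (hθ : θk > 0)
    (hωT : Complex.exp (2 * Complex.I * ω * T) ≠ 1)
    (h1 : θk ≠ ω) (h2 : θk ≠ -ω)
    (h3 : Complex.exp (Complex.I * θk * T) ≠ Complex.exp (Complex.I * ω * T)) :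
    (1 / (Complex.I * ω + Complex.I * θk)) *
          (Complex.exp (Complex.I * ω * T + Complex.I * θk * T) - 1) -
        (1 / (Complex.I * ω - Complex.I * θk)) *
          (Complex.exp (Complex.I * ω * T - Complex.I * θk * T) - 1) ≠ 0 := by
  intro hzero
  set z := Complex.exp (Complex.I * ω * T) with hz
  set w := Complex.exp (Complex.I * θk * T) with hw
  have hz0 : z ≠ 0 := Complex.exp_ne_zero _
  have hw0 : w ≠ 0 := Complex.exp_ne_zero _
  have ha : (Complex.I * ω + Complex.I * θk) ≠ 0 := by
    intro h
    have h' : Complex.I * ((ω : ℂ) + θk) = 0 := by linear_combination h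
    rcases mul_eq_zero.mp h' with h'' | h''
    · exact Complex.I_ne_zero h''
    · have : ((ω + θk : ℝ) : ℂ) = 0 := by push_cast; linear_combination h''
      have := Complex.ofReal_eq_zero.mp this
      exact h2 (by linarith)
  have hb : (Complex.I * ω - Complex.I * θk) ≠ 0 := by
    intro h
    have h' : Complex.I * ((ω : ℂ) - θk) = 0 := by linear_combination h
    rcases mul_eq_zero.mp h' with h'' | h''
    · exact Complex.I_ne_zero h''
    · have : ((ω - θk : ℝ) : ℂ) = 0 := by push_cast; linear_combination h''
      have := Complex.ofReal_eq_zero.mp this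
      exact h1 (by linarith)
  have hθ0 : (Complex.I * (θk : ℂ)) ≠ 0 := by
    intro h
    rcases mul_eq_zero.mp h with h'' | h''
    · exact Complex.I_ne_zero h''
    · exact (ne_of_gt hθ) (Complex.ofReal_eq_zero.mp h'')
  have hzz : Complex.exp (2 * Complex.I * ω * T) = z * z := by
    rw [hz, ← Complex.exp_add]; ring_nf
  have hzw : Complex.exp (Complex.I * ω * T + Complex.I * θk * T) = z * w := by
    rw [Complex.exp_add]
  have hzw' : Complex.exp (Complex.I * ω * T - Complex.I * θk * T) = z * w⁻¹ := by
    rw [Complex.exp_sub, ← hz, ← hw]; field_simp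
  rw [hzw, hzw'] at hzero
  have E0 : (Complex.I * ω - Complex.I * θk) * (z * w - 1) * w
      = (Complex.I * ω + Complex.I * θk) * (z - w) := by
    linear_combination ((Complex.I * ω + Complex.I * θk) * (Complex.I * ω - Complex.I * θk) * w) * hzero
      - (Complex.I * ω - Complex.I * θk) * w * (z * w - 1) * (mul_one_div_cancel ha)
      + (Complex.I * ω + Complex.I * θk) * w * (z * w⁻¹ - 1) * (mul_one_div_cancel hb)
      + (Complex.I * ω + Complex.I * θk) * z * (mul_inv_cancel₀ hw0)
  have hconjz : (starRingEnd ℂ) z = z⁻¹ := by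
    rw [hz, ← Complex.exp_conj, ← Complex.exp_neg]
    congr 1
    simp [Complex.conj_I]
  have hconjw : (starRingEnd ℂ) w = w⁻¹ := by
    rw [hw, ← Complex.exp_conj, ← Complex.exp_neg]
    congr 1
    simp [Complex.conj_I]
  have C0' := congrArg (starRingEnd ℂ) E0
  simp only [map_mul, map_sub, map_add, map_one, hconjz, hconjw, Complex.conj_I,
    Complex.conj_ofReal] at C0'
  field_simp at C0'
  have hfac : z * w * ((Complex.I * ω - Complex.I * θk) * (z * w - 1)
      - (Complex.I * ω + Complex.I * θk) * w * (z - w)) = 0 := by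
    linear_combination (z * w * Complex.I) * C0'
  have C0 : (Complex.I * ω - Complex.I * θk) * (z * w - 1)
      = (Complex.I * ω + Complex.I * θk) * w * (z - w) := by
    rcases mul_eq_zero.mp hfac with h | h
    · exact absurd h (mul_ne_zero hz0 hw0)
    · exact sub_eq_zero.mp h
  have key : (Complex.I * ω + Complex.I * θk) * (z - w) * (1 - w^2) = 0 := by
    linear_combination w * C0 - E0
  rcases mul_eq_zero.mp key with h | h
  · rcases mul_eq_zero.mp h with h' | h'
    · exact ha h'
    · exact h3 (sub_eq_zero.mp h').symm
  · have hw2 : (w - 1) * (w + 1) = 0 := by linear_combination -h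
    rcases mul_eq_zero.mp hw2 with h' | h'
    · have hw1 : w = 1 := by linear_combination h'
      rw [hw1] at E0
      have h5 : (Complex.I * (θk:ℂ)) * (z - 1) = 0 := by
        linear_combination (-1/2 : ℂ) * E0
      rcases mul_eq_zero.mp h5 with h'' | h''
      · exact hθ0 h''
      · exact hωT (by rw [hzz, sub_eq_zero.mp h'']; ring)
    · have hw1 : w = -1 := by linear_combination h'
      rw [hw1] at E0
      have h5 : (Complex.I * (θk:ℂ)) * (z + 1) = 0 := by
        linear_combination (-1/2 : ℂ) * E0
      rcases mul_eq_zero.mp h5 with h'' | h''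
      · exact hθ0 h''
      · have : z = -1 := by linear_combination h''
        exact hωT (by rw [hzz, this]; ring)

theorem stmt14 (T : ℝ) (hT : T > 0) (ω : ℝ)
    (hωT : Complex.exp (2 * Complex.I * ω * T) ≠ 1)
    (θ : ℕ → ℝ)
    (hpos : ∀ k, θ k > 0)
    (htend : Tendsto θ atTop atTop)
    (h1 : ∀ k, θ k ≠ ω) (h2 : ∀ k, θ k ≠ -ω)
    (h3 : ∀ k, Complex.exp (Complex.I * θ k * T) ≠ Complex.exp (Complex.I * ω * T))
    (h4 : ∀ k, Complex.exp (Complex.I * θ k * T) ≠ Complex.exp (-Complex.I * ω * T))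
    (d : ℕ → ℂ)
    (hd : ∀ k, d k = (1 / (Complex.I * ω + Complex.I * θ k)) *
          (Complex.exp (Complex.I * ω * T + Complex.I * θ k * T) - 1) -
        (1 / (Complex.I * ω - Complex.I * θ k)) *
          (Complex.exp (Complex.I * ω * T - Complex.I * θ k * T) - 1)) :
    ∃ δ : ℝ, δ > 0 ∧ ∀ k, ‖d k‖ * (1 + θ k) ≥ δ := by
  have hsin : Real.sin (ω * T) ≠ 0 := sin_ne_aux T ω hωT
  set c : ℝ := |Real.sin (ω * T)| with hcdef
  have hc0 : 0 < c := abs_pos.mpr hsin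
  have hdne : ∀ k, d k ≠ 0 := fun k => by
    rw [hd k]
    exact d_ne_zero T ω (θ k) (hpos k) hωT (h1 k) (h2 k) (h3 k)
  have hfpos : ∀ k, 0 < ‖d k‖ * (1 + θ k) := fun k =>
    mul_pos (norm_pos_iff.mpr (hdne k)) (by have := hpos k; linarith)
  set C : ℝ := 2 * |1 - ω| + 2 * |1 + ω| with hCdef
  have hC0 : 0 ≤ C := by positivity
  have hev : ∀ᶠ k in atTop, c ≤ ‖d k‖ * (1 + θ k) := by
    filter_upwards [htend.eventually_ge_atTop (|ω| + C / c + 1)] with k hk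
    have hθpos := hpos k
    set θk := θ k with hθk
    have hden : 0 < θk - |ω| := by
      have : 0 ≤ C / c := by positivity
      linarith
    have haR : ω + θk ≠ 0 := fun h => h2 k (by rw [← hθk]; linarith)
    have hbR : θk - ω ≠ 0 := fun h => h1 k (by rw [← hθk]; linarith)
    have haC : ((ω:ℂ) + θk) ≠ 0 := by
      intro h; apply haR
      exact_mod_cast congrArg Complex.re (by push_cast at h ⊢; linear_combination h :
        ((ω + θk : ℝ) : ℂ) = 0)
    have hbC : ((θk:ℂ) - ω) ≠ 0 := by
      intro h; apply hbR
      exact_mod_cast congrArg Complex.re (by push_cast at h ⊢; linear_combination h :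
        ((θk - ω : ℝ) : ℂ) = 0)
    set z := Complex.exp (Complex.I * ω * T) with hz
    set w := Complex.exp (Complex.I * θk * T) with hw
    have hz0 : z ≠ 0 := Complex.exp_ne_zero _
    have hw0 : w ≠ 0 := Complex.exp_ne_zero _
    have ha : (Complex.I * ω + Complex.I * θk) ≠ 0 := by
      intro h; apply haC; linear_combination (-Complex.I) * h + ((ω:ℂ) + θk) * Complex.I_sq
    have hb : (Complex.I * ω - Complex.I * θk) ≠ 0 := by
      intro h; apply hbC; linear_combination Complex.I * h + ((θk:ℂ) - ω) * Complex.I_sq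
    have hzw : Complex.exp (Complex.I * ω * T + Complex.I * θk * T) = z * w := by
      rw [Complex.exp_add]
    have hzw' : Complex.exp (Complex.I * ω * T - Complex.I * θk * T) = z * w⁻¹ := by
      rw [Complex.exp_sub, ← hz, ← hw]; field_simp
    set g : ℂ := d k * Complex.I * (1 + θk) with hg
    set main : ℂ := z * w + z * w⁻¹ - 2 with hmaindef
    have herr : g - main = (z * w - 1) * (((1 - ω) / (ω + θk) : ℝ) : ℂ)
        + (z * w⁻¹ - 1) * (((1 + ω) / (θk - ω) : ℝ) : ℂ) := by
      rw [hg, hd k, ← hθk, hzw, hzw', hmaindef]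
      push_cast
      field_simp [haC, hbC, sub_ne_zero.mpr (sub_ne_zero.mp hbC).symm]
      ring
    -- |main| ≥ 2c
    have hwinv : w + w⁻¹ = ((2 * Real.cos (θk * T) : ℝ) : ℂ) := by
      rw [hw, ← Complex.exp_neg,
        show Complex.I * θk * T = ((θk * T : ℝ) : ℂ) * Complex.I by push_cast; ring,
        show -(((θk * T : ℝ) : ℂ) * Complex.I) = ((-(θk * T) : ℝ) : ℂ) * Complex.I by
          push_cast; ring,
        Complex.exp_mul_I, Complex.exp_mul_I,
        ← Complex.ofReal_cos, ← Complex.ofReal_sin,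
        ← Complex.ofReal_cos, ← Complex.ofReal_sin]
      push_cast [Real.cos_neg, Real.sin_neg]
      ring
    have hmain : 2 * c ≤ ‖main‖ := by
      have h := abs_aux (ω * T) (2 * Real.cos (θk * T))
      have hz' : Complex.exp (Complex.I * ((ω * T : ℝ) : ℂ)) = z := by
        rw [hz]; push_cast; ring_nf
      rw [hz'] at h
      have hme : main = z * ((2 * Real.cos (θk * T) : ℝ) : ℂ) - 2 := by
        rw [hmaindef, ← hwinv]; ring
      rw [hme]
      exact h
    -- |g - main| ≤ c
    have habs1 : ‖z * w‖ = 1 := by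
      rw [← hzw, show Complex.I * ω * T + Complex.I * θk * T
        = Complex.I * ((ω * T + θk * T : ℝ) : ℂ) by push_cast; ring]
      exact abs_exp_I_mul _
    have habs2 : ‖z * w⁻¹‖ = 1 := by
      rw [← hzw', show Complex.I * ω * T - Complex.I * θk * T
        = Complex.I * ((ω * T - θk * T : ℝ) : ℂ) by push_cast; ring]
      exact abs_exp_I_mul _
    have ht1 : ‖z * w - 1‖ ≤ 2 := by
      have h' := norm_sub_le (z * w) (1 : ℂ)
      simp only [norm_one] at h'
      rw [habs1] at h'
      linarith
    have ht2 : ‖z * w⁻¹ - 1‖ ≤ 2 := by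
      have h' := norm_sub_le (z * w⁻¹) (1 : ℂ)
      simp only [norm_one] at h'
      rw [habs2] at h'
      linarith
    have hom : θk - |ω| ≤ |ω + θk| := by
      rcases abs_cases (ω + θk) with ⟨h, _⟩ | ⟨h, _⟩ <;>
        rcases abs_cases ω with ⟨h', _⟩ | ⟨h', _⟩ <;> linarith
    have hom' : θk - |ω| ≤ |θk - ω| := by
      rcases abs_cases (θk - ω) with ⟨h, _⟩ | ⟨h, _⟩ <;>
        rcases abs_cases ω with ⟨h', _⟩ | ⟨h', _⟩ <;> linarith
    have hq1 : |(1 - ω) / (ω + θk)| ≤ |1 - ω| / (θk - |ω|) := by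
      rw [abs_div]
      gcongr
    have hq2 : |(1 + ω) / (θk - ω)| ≤ |1 + ω| / (θk - |ω|) := by
      rw [abs_div]
      gcongr
    have herrb : ‖g - main‖ ≤ C / (θk - |ω|) := by
      rw [herr]
      calc ‖(z * w - 1) * (((1 - ω) / (ω + θk) : ℝ) : ℂ)
            + (z * w⁻¹ - 1) * (((1 + ω) / (θk - ω) : ℝ) : ℂ)‖
          ≤ ‖(z * w - 1) * (((1 - ω) / (ω + θk) : ℝ) : ℂ)‖
            + ‖(z * w⁻¹ - 1) * (((1 + ω) / (θk - ω) : ℝ) : ℂ)‖ := by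
            exact norm_add_le _ _
        _ = ‖z * w - 1‖ * |(1 - ω) / (ω + θk)|
            + ‖z * w⁻¹ - 1‖ * |(1 + ω) / (θk - ω)| := by
            rw [norm_mul, norm_mul, Complex.norm_real, Real.norm_eq_abs, Complex.norm_real, Real.norm_eq_abs]
        _ ≤ 2 * (|1 - ω| / (θk - |ω|)) + 2 * (|1 + ω| / (θk - |ω|)) := by
            exact add_le_add (mul_le_mul ht1 hq1 (abs_nonneg _) (by norm_num))
              (mul_le_mul ht2 hq2 (abs_nonneg _) (by norm_num))
        _ = C / (θk - |ω|) := by rw [hCdef]; field_simp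
    have hCc : C / (θk - |ω|) ≤ c := by
      rw [div_le_iff₀ hden]
      have hCc' : c * (C / c) = C := by field_simp
      nlinarith [mul_le_mul_of_nonneg_left (show C / c + 1 ≤ θk - |ω| by linarith)
        (le_of_lt hc0)]
    -- combine
    have hgl : c ≤ ‖g‖ := by
      have h6 := norm_sub_norm_le main g
      have h7 : ‖main - g‖ = ‖g - main‖ :=
        norm_sub_rev _ _
      have := le_trans herrb hCc
      linarith
    have hgf : ‖g‖ = ‖d k‖ * (1 + θk) := by
      rw [hg, show ((1:ℂ) + (θk:ℂ)) = ((1 + θk : ℝ) : ℂ) by push_cast; ring,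
        norm_mul, norm_mul, Complex.norm_I, Complex.norm_real, Real.norm_eq_abs,
        abs_of_pos (show (0:ℝ) < 1 + θk by linarith)]
      ring
    linarith [hgl, hgf.symm.le]
  obtain ⟨N, hN⟩ := eventually_atTop.mp hev
  classical
  set F : Finset ℝ := insert c ((Finset.range N).image
    (fun k => ‖d k‖ * (1 + θ k))) with hF
  have hne : F.Nonempty := ⟨c, Finset.mem_insert_self _ _⟩
  refine ⟨F.min' hne, ?_, ?_⟩
  · have hmem := F.min'_mem hne
    rcases Finset.mem_insert.mp hmem with h | h
    · rw [h]; exact hc0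
    · obtain ⟨j, _, hj⟩ := Finset.mem_image.mp h
      rw [← hj]; exact hfpos j
  · intro k
    rcases lt_or_ge k N with hkN | hkN
    · exact Finset.min'_le F _ (Finset.mem_insert.mpr (Or.inr
        (Finset.mem_image.mpr ⟨k, Finset.mem_range.mpr hkN, rfl⟩)))
    · exact le_trans (Finset.min'_le F c (Finset.mem_insert_self _ _)) (hN k hkN)
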